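/- Let $x_1 \le x_2 \le \cdots \le x_n$ be positive real numbers with $n \ge 2$, and set $b_1 = \sum_i x_i$ and $b_2 = \sum_{i<j} x_i x_j$. Then $b_1 - 2 b_2 / b_1 \le x_n < (b_1^2 - 2 b_2)^{1/2}$. -/
import Mathlib


open Finset

/-- For positive reals `x₀ ≤ ⋯ ≤ x_{n}` (at least two of them),
with `b₁ = ∑ xᵢ` and `b₂ = ∑_{i<j} xᵢ xⱼ`, the largest one satisfies
`b₁ - 2 b₂ / b₁ ≤ x_max < √(b₁² - 2 b₂)`. -/
theorem stmt1 (n : ℕ) (hn : 1 ≤ n) (x : Fin (n + 1) → ℝ) (hmono : Monotone x)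
    (hpos : ∀ i, 0 < x i)
    (b1 b2 : ℝ) (hb1 : b1 = ∑ i : Fin (n + 1), x i)
    (hb2 : b2 = ∑ i : Fin (n + 1), ∑ j : Fin (n + 1),
      if i < j then x i * x j else 0) :
    b1 - 2 * b2 / b1 ≤ x (Fin.last n) ∧
    x (Fin.last n) < Real.sqrt (b1 ^ 2 - 2 * b2) := by
  have hb1pos : 0 < b1 := by
    rw [hb1]
    exact Finset.sum_pos (fun i _ => hpos i) ⟨Fin.last n, mem_univ _⟩
  -- Key identity: b1^2 - 2*b2 = ∑ x i ^ 2
  have key : b1 ^ 2 - 2 * b2 = ∑ i : Fin (n + 1), x i ^ 2 := by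
    have h1 : b1 ^ 2 = ∑ i : Fin (n + 1), ∑ j : Fin (n + 1), x i * x j := by
      rw [hb1, sq, Finset.sum_mul_sum]
    have h2 : ∀ i j : Fin (n + 1), x i * x j =
        (if i = j then x i ^ 2 else 0) + (if i < j then x i * x j else 0)
          + (if j < i then x i * x j else 0) := by
      intro i j
      rcases lt_trichotomy i j with h | h | h
      · simp [h, h.ne, not_lt.2 h.le]
      · simp [h, lt_irrefl, sq]
      · simp [h, h.ne', not_lt.2 h.le]
    have h3 : (∑ i : Fin (n + 1), ∑ j : Fin (n + 1), if j < i then x i * x j else 0)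
        = b2 := by
      rw [hb2, Finset.sum_comm]
      congr 1; ext i; congr 1; ext j
      rcases lt_or_ge i j with h | h
      · simp [h, mul_comm]
      · simp [not_lt.2 h]
    calc b1 ^ 2 - 2 * b2
        = (∑ i : Fin (n + 1), ∑ j : Fin (n + 1), x i * x j) - 2 * b2 := by rw [h1]
      _ = (∑ i : Fin (n + 1), ∑ j : Fin (n + 1),
            ((if i = j then x i ^ 2 else 0) + (if i < j then x i * x j else 0)
              + (if j < i then x i * x j else 0))) - 2 * b2 := by
            congr 1; exact Finset.sum_congr rfl fun i _ =>
              Finset.sum_congr rfl fun j _ => h2 i j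
      _ = (∑ i : Fin (n + 1), x i ^ 2) + b2 + b2 - 2 * b2 := by
            simp only [Finset.sum_add_distrib]
            rw [h3, ← hb2]
            simp
      _ = ∑ i : Fin (n + 1), x i ^ 2 := by ring
  constructor
  · -- b1 - 2*b2/b1 ≤ x (Fin.last n)
    have this : b1 * b1 - 2 * b2 ≤ x (Fin.last n) * b1 := by
      have hsum : ∑ i : Fin (n + 1), x i ^ 2 ≤ ∑ i : Fin (n + 1), x (Fin.last n) * x i := by
        apply Finset.sum_le_sum
        intro i _
        have hx : x i ≤ x (Fin.last n) := hmono (Fin.le_last i)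
        have := mul_le_mul_of_nonneg_right hx (hpos i).le
        simpa [sq] using this
      calc b1 * b1 - 2 * b2 = b1 ^ 2 - 2 * b2 := by ring
        _ = ∑ i : Fin (n + 1), x i ^ 2 := key
        _ ≤ ∑ i : Fin (n + 1), x (Fin.last n) * x i := hsum
        _ = x (Fin.last n) * b1 := by rw [hb1, Finset.mul_sum]
    have heq : b1 - 2 * b2 / b1 = (b1 * b1 - 2 * b2) / b1 := by field_simp
    rw [heq, div_le_iff₀ hb1pos]
    linarith
  · rw [Real.lt_sqrt (hpos _).le, key]
    have h0 : (0 : Fin (n + 1)) ≠ Fin.last n := by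
      intro h
      have := congrArg Fin.val h
      simp [Fin.last] at this
      omega
    exact Finset.single_lt_sum h0 (mem_univ _) (mem_univ _)
      (pow_pos (hpos 0) 2) (fun k _ _ => sq_nonneg (x k))
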